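/- Let T be a star with center c and m ≥ 3 vertices. A linear order ≻ on the vertex set of T is single-peaked on T if and only if c occupies the first or the second position of ≻. -/

import Mathlib

/-- `x` appears strictly before `y` in the list `l`. -/
def listBefore {V : Type*} (l : List V) (x y : V) : Prop :=
  ∃ i j : Fin l.length, i < j ∧ l.get i = x ∧ l.get j = y

/-- The restriction of `r` to the finite set `X` is single peaked with respect to the
restriction of `r'` to `X`. -/
def SinglePeakedOn {V : Type*} (X : Finset V) (r r' : V → V → Prop) : Prop :=
  ∀ p ∈ X, (∀ x ∈ X, x ≠ p → r p x) →
    ∀ x ∈ X, ∀ y ∈ X, ((r' p x ∧ r' x y) ∨ (r' y x ∧ r' x p)) → r x y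

/-- A linear order `r` on the vertex set of `G` is single peaked on the tree `G`. -/
def SinglePeakedOnTree {V : Type*} [DecidableEq V] (G : SimpleGraph V)
    (r : V → V → Prop) : Prop :=
  ∀ l : List V, l.Nodup → l.Chain' G.Adj →
    SinglePeakedOn l.toFinset r (listBefore l)

/-- The star with center `c`: `c` is adjacent to every other vertex and these are the
only edges. -/
def starGraph {V : Type*} (c : V) : SimpleGraph V :=
  SimpleGraph.fromRel (fun a _ => a = c)

lemma listBefore_one {V : Type*} (a x y : V) : ¬ listBefore [a] x y := by
  rintro ⟨i, j, hij, -, -⟩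
  have hi := i.isLt
  have hj := j.isLt
  simp only [List.length_singleton] at hi hj
  omega

lemma listBefore_two {V : Type*} (a b x y : V) :
    listBefore [a, b] x y ↔ x = a ∧ y = b := by
  constructor
  · rintro ⟨i, j, hij, hx, hy⟩
    fin_cases i <;> fin_cases j <;> simp_all
  · rintro ⟨hx, hy⟩
    exact ⟨⟨0, by norm_num⟩, ⟨1, by norm_num⟩, Fin.mk_lt_mk.mpr (by norm_num), hx.symm, hy.symm⟩

lemma listBefore_three {V : Type*} (a b d x y : V) :
    listBefore [a, b, d] x y ↔ (x = a ∧ (y = b ∨ y = d)) ∨ (x = b ∧ y = d) := by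
  constructor
  · rintro ⟨i, j, hij, hx, hy⟩
    fin_cases i <;> fin_cases j <;> simp_all
  · rintro (⟨hx, hy | hy⟩ | ⟨hx, hy⟩)
    · exact ⟨⟨0, by norm_num⟩, ⟨1, by norm_num⟩, Fin.mk_lt_mk.mpr (by norm_num), hx.symm, hy.symm⟩
    · exact ⟨⟨0, by norm_num⟩, ⟨2, by norm_num⟩, Fin.mk_lt_mk.mpr (by norm_num), hx.symm, hy.symm⟩
    · exact ⟨⟨1, by norm_num⟩, ⟨2, by norm_num⟩, Fin.mk_lt_mk.mpr (by norm_num), hx.symm, hy.symm⟩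

lemma starGraph_adj {V : Type*} (c a b : V) :
    (starGraph c).Adj a b ↔ a ≠ b ∧ (a = c ∨ b = c) := by
  simp [starGraph, SimpleGraph.fromRel_adj, or_comm]


/-- For a star with center `c` on `m ≥ 3` vertices, a linear order on the vertex set is
single peaked on the star if and only if `c` occupies the first or the second position,
i.e. at most one candidate is preferred to `c`. -/
theorem singlePeaked_on_star_iff
    {V : Type*} [Fintype V] [DecidableEq V] (c : V) (hm : 3 ≤ Fintype.card V)
    (succ : V → V → Prop) [DecidableRel succ] (hsto : IsStrictTotalOrder V succ) :
    SinglePeakedOnTree (starGraph c) succ ↔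
      (Finset.univ.filter fun x => succ x c).card ≤ 1 := by
  have asucc : ∀ {x y : V}, succ x y → ¬ succ y x := fun hxy hyx =>
    hsto.irrefl _ (hsto.trans _ _ _ hxy hyx)
  have tri : ∀ x y : V, x ≠ y → succ x y ∨ succ y x := by
    intro x y hxy
    rcases (by have := hsto.trichotomous x y; tauto : succ x y ∨ x = y ∨ succ y x) with h | h | h
    · exact Or.inl h
    · exact absurd h hxy
    · exact Or.inr h
  constructor
  · intro h
    by_contra hcard
    push_neg at hcard
    obtain ⟨x, hx, y, hy, hxy⟩ := Finset.one_lt_card.mp hcard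
    simp only [Finset.mem_filter] at hx hy
    have hxc : succ x c := hx.2
    have hyc : succ y c := hy.2
    have hxnc : x ≠ c := fun e => hsto.irrefl c (e ▸ hxc)
    have hync : y ≠ c := fun e => hsto.irrefl c (e ▸ hyc)
    have key : ∀ u v : V, succ u c → succ v c → u ≠ v → succ u v → False := by
      intro u v huc hvc huv huv2
      have hunc : u ≠ c := fun e => hsto.irrefl c (e ▸ huc)
      have hvnc : v ≠ c := fun e => hsto.irrefl c (e ▸ hvc)
      have hl := h [u, c, v] (by simp [hunc, hvnc.symm, huv]) ?_
      · have hsp := hl u (by simp) ?_ c (by simp) v (by simp) ?_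
        · exact asucc hvc hsp
        · intro z hz hzu
          have hz' : z = u ∨ z = c ∨ z = v := by simpa using hz
          rcases hz' with rfl | rfl | rfl
          · exact absurd rfl hzu
          · exact huc
          · exact huv2
        · exact Or.inl ⟨(listBefore_three u c v u c).mpr (Or.inl ⟨rfl, Or.inl rfl⟩),
            (listBefore_three u c v c v).mpr (Or.inr ⟨rfl, rfl⟩)⟩
      · refine List.isChain_cons_cons.mpr ⟨(starGraph_adj c u c).mpr ⟨hunc, Or.inr rfl⟩, ?_⟩
        exact List.isChain_cons_cons.mpr ⟨(starGraph_adj c c v).mpr ⟨hvnc.symm, Or.inl rfl⟩,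
          List.isChain_singleton v⟩
    rcases tri x y hxy with h1 | h1
    · exact key x y hxc hyc hxy h1
    · exact key y x hyc hxc hxy.symm h1
  · intro hcard l hnd hch
    have key : ∀ u v : V, succ u c → u ≠ v → v ≠ c → succ c v := by
      intro u v huc huv hvc
      have hvnc : ¬ succ v c := by
        intro hv
        have hsub : ({u, v} : Finset V) ⊆ Finset.univ.filter fun x => succ x c := by
          intro z hz
          simp only [Finset.mem_insert, Finset.mem_singleton] at hz
          rcases hz with rfl | rfl <;> simp [huc, hv]
        have h2 : (({u, v} : Finset V)).card = 2 := Finset.card_pair huv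
        have := Finset.card_le_card hsub
        omega
      rcases tri c v (Ne.symm hvc) with h1 | h1
      · exact h1
      · exact absurd h1 hvnc
    obtain _ | ⟨a, _ | ⟨b, _ | ⟨d, _ | ⟨e, rest⟩⟩⟩⟩ := l
    · intro p hp
      simp at hp
    · intro p hp hpk x hx y hy hxy
      rcases hxy with ⟨h1, _⟩ | ⟨h1, _⟩ <;> exact absurd h1 (listBefore_one a _ _)
    · intro p hp hpk x hx y hy hxy
      have hab : a ≠ b := by simpa using hnd
      rcases hxy with ⟨h1, h2⟩ | ⟨h1, h2⟩
      · rw [listBefore_two] at h1 h2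
        exact absurd (h2.1.symm.trans h1.2) hab
      · rw [listBefore_two] at h1 h2
        exact absurd (h2.1.symm.trans h1.2) hab
    · -- the path [a, b, d]; the middle vertex b must be c
      have hab : a ≠ b := by simp at hnd; tauto
      have had : a ≠ d := by simp at hnd; tauto
      have hbd : b ≠ d := by simp at hnd; tauto
      have h1 := (starGraph_adj c a b).mp (List.isChain_cons_cons.mp hch).1
      have h2 := (starGraph_adj c b d).mp (List.isChain_cons_cons.mp (List.isChain_cons_cons.mp hch).2).1
      have hbc : b = c := by
        rcases h1.2 with h | h
        · rcases h2.2 with h' | h'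
          · exact h'
          · exact absurd (h.trans h'.symm) had
        · exact h
      have hdc : d ≠ c := fun e => hbd (hbc.trans e.symm)
      have hac : a ≠ c := fun e => hab (e.trans hbc.symm)
      intro p hp hpk x hx y hy hxy
      rcases hxy with ⟨k1, k2⟩ | ⟨k1, k2⟩
      · rw [listBefore_three] at k1 k2
        rcases k2 with ⟨hxa, _⟩ | ⟨hxb, hyd⟩
        · -- x = a; but k1 says x is b or d
          rcases k1 with ⟨_, hx' | hx'⟩ | ⟨_, hx'⟩
          · exact absurd (hxa.symm.trans hx') hab
          · exact absurd (hxa.symm.trans hx') had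
          · exact absurd (hxa.symm.trans hx') had
        · -- x = b, y = d; k1 forces p = a
          have hpa : p = a := by
            rcases k1 with ⟨hp', _⟩ | ⟨_, hx'⟩
            · exact hp'
            · exact absurd (hxb.symm.trans hx') hbd
          rw [hxb, hyd, hbc]
          have hpb : succ p b := hpk b (by simp) (by rw [hpa]; exact hab.symm)
          rw [hpa, hbc] at hpb
          exact key a d hpb had hdc
      · rw [listBefore_three] at k1 k2
        rcases k2 with ⟨hxa, _⟩ | ⟨hxb, hpd⟩
        · rcases k1 with ⟨_, hx' | hx'⟩ | ⟨_, hx'⟩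
          · exact absurd (hxa.symm.trans hx') hab
          · exact absurd (hxa.symm.trans hx') had
          · exact absurd (hxa.symm.trans hx') had
        · -- x = b, p = d; k1 forces y = a
          have hya : y = a := by
            rcases k1 with ⟨hy', _⟩ | ⟨_, hx'⟩
            · exact hy'
            · exact absurd (hxb.symm.trans hx') hbd
          rw [hxb, hya, hbc]
          have hpb : succ p b := hpk b (by simp) (by rw [hpd]; exact hbd)
          rw [hpd, hbc] at hpb
          exact key d a hpb (Ne.symm had) hac
    · -- length ≥ 4 : impossible in a star
      exfalso
      have h1 := (starGraph_adj c a b).mp (List.isChain_cons_cons.mp hch).1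
      have h2 := (starGraph_adj c b d).mp (List.isChain_cons_cons.mp (List.isChain_cons_cons.mp hch).2).1
      have h3 := (starGraph_adj c d e).mp
        (List.isChain_cons_cons.mp (List.isChain_cons_cons.mp (List.isChain_cons_cons.mp hch).2).2).1
      have had : a ≠ d := by simp at hnd; tauto
      have hbe : b ≠ e := by simp at hnd; tauto
      have hbc : b = c := by
        rcases h1.2 with h | h
        · rcases h2.2 with h' | h'
          · exact h'
          · exact absurd (h.trans h'.symm) had
        · exact h
      have hdc : d ≠ c := fun e => h2.1 (hbc.trans e.symm)
      rcases h3.2 with h | h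
      · exact hdc h
      · exact hbe (hbc.trans h.symm)
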